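/- Let H be a separable infinite-dimensional complex Hilbert space. Then the linear span of the set of hypercyclic bounded linear operators on H is dense in B(H) with respect to the operator norm. -/

import Mathlib

open Filter Topology Set Submodule

/-- A continuous linear operator `T` is hypercyclic if some vector has dense orbit. -/
def Hypercyclic {𝕜 X : Type*} [Semiring 𝕜] [TopologicalSpace X] [AddCommMonoid X]
    [Module 𝕜 X] (T : X →L[𝕜] X) : Prop :=
  ∃ x : X, Dense (Set.range fun n : ℕ => (T ^ n) x)

noncomputable section

namespace Chan

local notation "⟪" x ", " y "⟫" => @inner ℂ _ _ x y

variable {H : Type*} [NormedAddCommGroup H] [InnerProductSpace ℂ H] [CompleteSpace H]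

/-! ### generic helpers -/

/-- Orthogonal projection onto a submodule, as a bare function to `H`. -/
def piK (K : Submodule ℂ H) [HasOrthogonalProjection K] (x : H) : H :=
  (orthogonalProjection K x : H)

lemma piK_mem (K : Submodule ℂ H) [HasOrthogonalProjection K] (x : H) : piK K x ∈ K :=
  (orthogonalProjection K x).2

lemma piK_eq_self (K : Submodule ℂ H) [HasOrthogonalProjection K] {x : H} (h : x ∈ K) :
    piK K x = x := by
  show K.starProjection x = x
  exact Submodule.starProjection_eq_self_iff.2 h

lemma norm_sub_piK_le (K : Submodule ℂ H) [HasOrthogonalProjection K] (x : H) {w : H}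
    (hw : w ∈ K) : ‖x - piK K x‖ ≤ ‖x - w‖ := by
  show ‖x - K.starProjection x‖ ≤ ‖x - w‖
  rw [Submodule.starProjection_minimal]
  exact ciInf_le ⟨0, fun b hb => by rcases hb with ⟨y, rfl⟩; positivity⟩ (⟨w, hw⟩ : K)

lemma norm_sub_piK_le_self (K : Submodule ℂ H) [HasOrthogonalProjection K] (x : H) :
    ‖x - piK K x‖ ≤ ‖x‖ := by
  simpa using norm_sub_piK_le K x K.zero_mem

lemma mem_orthogonal_span_of {S : Set H} {v : H} (h : ∀ s ∈ S, ⟪s, v⟫ = 0) :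
    v ∈ (span ℂ S)ᗮ := by
  rw [Submodule.mem_orthogonal]
  intro u hu
  induction hu using Submodule.span_induction with
  | mem s hs => exact h s hs
  | zero => simp
  | add a b _ _ ha hb => rw [inner_add_left, ha, hb, add_zero]
  | smul c a _ ha => rw [inner_smul_left, ha, mul_zero]

/-- pointwise power bound -/
lemma pow_apply_norm_le {S : H →L[ℂ] H} {C : ℝ} (hC : 0 ≤ C)
    (h : ∀ y, ‖S y‖ ≤ C * ‖y‖) : ∀ (n : ℕ) (y : H), ‖(S ^ n) y‖ ≤ C ^ n * ‖y‖ := by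
  intro n
  induction n with
  | zero => intro y; simp
  | succ n ih =>
    intro y
    rw [pow_succ']
    calc ‖S ((S ^ n) y)‖ ≤ C * ‖(S ^ n) y‖ := h _
      _ ≤ C * (C ^ n * ‖y‖) := by
          exact mul_le_mul_of_nonneg_left (ih y) hC
      _ = C ^ (n + 1) * ‖y‖ := by ring

lemma pow_mul_pow_eq_one {T V : H →L[ℂ] H} (h : T * V = 1) :
    ∀ n : ℕ, T ^ n * V ^ n = 1 := by
  intro n
  induction n with
  | zero => simp
  | succ n ih =>
    rw [pow_succ T, pow_succ' V, mul_assoc, ← mul_assoc T, h, one_mul, ih]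

/-! ### Birkhoff transitivity -/

theorem hypercyclic_of_dense_trans [TopologicalSpace.SeparableSpace H] (T : H →L[ℂ] H)
    (htrans : ∀ U V : Set H, IsOpen U → IsOpen V → U.Nonempty → V.Nonempty →
      ∃ (n : ℕ) (x : H), x ∈ U ∧ (T ^ n) x ∈ V) : Hypercyclic T := by
  haveI : Nonempty H := ⟨0⟩
  haveI := UniformSpace.secondCountable_of_separable H
  obtain ⟨B, hBc, hBne, hBb⟩ := TopologicalSpace.exists_countable_basis H
  haveI : Countable B := hBc.to_subtype
  have hGo : ∀ s : B, IsOpen (⋃ n : ℕ, (fun y => (T ^ n) y) ⁻¹' (s : Set H)) := fun s =>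
    isOpen_iUnion fun n => ((hBb.isOpen s.2).preimage (T ^ n).continuous)
  have hGd : ∀ s : B, Dense (⋃ n : ℕ, (fun y => (T ^ n) y) ⁻¹' (s : Set H)) := by
    rintro ⟨s, hs⟩
    rw [dense_iff_inter_open]
    intro U hU hUne
    have hsne : s.Nonempty := by
      rw [Set.nonempty_iff_ne_empty]; rintro rfl; exact hBne hs
    obtain ⟨n, x, hxU, hxs⟩ := htrans U s hU (hBb.isOpen hs) hUne hsne
    exact ⟨x, hxU, Set.mem_iUnion.2 ⟨n, hxs⟩⟩
  have hdense := dense_iInter_of_isOpen hGo hGd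
  obtain ⟨x, hx⟩ := hdense.nonempty
  refine ⟨x, ?_⟩
  rw [dense_iff_inter_open]
  intro U hU hUne
  obtain ⟨y, hyU⟩ := hUne
  obtain ⟨s, hsB, hys, hsU⟩ := hBb.exists_subset_of_mem_open hyU hU
  have hxs := Set.mem_iInter.mp hx ⟨s, hsB⟩
  obtain ⟨n, hn⟩ := Set.mem_iUnion.mp hxs
  exact ⟨(T ^ n) x, hsU hn, ⟨n, rfl⟩⟩

/-! ### the adapted orthonormal system -/

section Construction

variable (hdim : ¬FiniteDimensional ℂ H) (A : H →L[ℂ] H) (f : ℕ → H)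

include hdim in
lemma exists_next (K : Submodule ℂ H) (hK : FiniteDimensional ℂ K) (g : H) :
    ∃ v : H, ‖v‖ = 1 ∧ v ∈ Kᗮ ∧ g ∈ K ⊔ span ℂ {v} := by
  haveI := hK
  have key : ∀ w : H, w ≠ 0 → w ∈ Kᗮ →
      ‖(‖w‖ : ℂ)⁻¹ • w‖ = 1 ∧ (‖w‖ : ℂ)⁻¹ • w ∈ Kᗮ ∧ w ∈ span ℂ {(‖w‖ : ℂ)⁻¹ • w} := by
    intro w hw hwK
    have hnw : (‖w‖ : ℂ) ≠ 0 := by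
      simpa using norm_ne_zero_iff.2 hw
    refine ⟨?_, Submodule.smul_mem _ _ hwK, ?_⟩
    · rw [norm_smul, norm_inv]
      simp only [Complex.norm_real, Real.norm_eq_abs, abs_norm]
      rw [inv_mul_cancel₀ (norm_ne_zero_iff.2 hw)]
    · rw [Submodule.mem_span_singleton]
      exact ⟨(‖w‖ : ℂ), by rw [smul_smul, mul_inv_cancel₀ hnw, one_smul]⟩
  by_cases hw : g - piK K g = 0
  · -- g ∈ K; pick any unit vector orthogonal to K
    have hg : g ∈ K := by
      have h := piK_mem K g
      rw [sub_eq_zero] at hw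
      rw [hw]; exact h
    obtain ⟨x, hx⟩ : ∃ x : H, x ∉ K := by
      by_contra hcon
      push_neg at hcon
      have hK' : K = ⊤ := Submodule.eq_top_iff'.2 hcon
      subst hK'
      exact hdim (Module.Finite.equiv Submodule.topEquiv)
    have hxw : x - piK K x ≠ 0 := by
      intro h0
      rw [sub_eq_zero] at h0
      rw [h0] at hx
      exact hx (piK_mem K x)
    obtain ⟨h1, h2, _⟩ := key _ hxw (K.sub_starProjection_mem_orthogonal x)
    exact ⟨_, h1, h2, Submodule.mem_sup_left hg⟩
  · obtain ⟨h1, h2, h3⟩ := key _ hw (K.sub_starProjection_mem_orthogonal g)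
    refine ⟨_, h1, h2, ?_⟩
    have hgg : piK K g + (g - piK K g) = g := by abel
    have hmem := Submodule.add_mem _ (Submodule.mem_sup_left (piK_mem K g))
      (Submodule.mem_sup_right h3)
    rwa [hgg] at hmem

/-- the target vector at step `n` -/
def target (n : ℕ) (prev : Fin n → H) : H :=
  if h : n - (2 ^ Nat.log 2 (n + 1) - 1) < 2 ^ Nat.log 2 (n + 1) - 1 then
    A (prev ⟨n - (2 ^ Nat.log 2 (n + 1) - 1), by
      have hk : 2 ^ Nat.log 2 (n + 1) ≤ n + 1 := Nat.pow_log_le_self 2 (Nat.succ_ne_zero n)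
      omega⟩)
  else f (Nat.log 2 (n + 1))

/-- the recursively constructed orthonormal system, as finite prefixes -/
def es : (n : ℕ) → Fin n → H
  | 0 => Fin.elim0
  | n + 1 => Fin.snoc (es n)
      (Classical.choose (exists_next hdim (span ℂ (Set.range (es n)))
        (FiniteDimensional.span_of_finite ℂ (Set.finite_range _)) (target A f n (es n))))

/-- the orthonormal system -/
def ee (n : ℕ) : H := es hdim A f (n + 1) (Fin.last n)

lemma es_apply : ∀ (n : ℕ) (i : ℕ) (h : i < n), es hdim A f n ⟨i, h⟩ = ee hdim A f i := by
  intro n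
  induction n with
  | zero => intro i h; omega
  | succ n ih =>
    intro i h
    rcases Nat.lt_or_ge i n with hi | hi
    · have : (⟨i, h⟩ : Fin (n + 1)) = Fin.castSucc ⟨i, hi⟩ := rfl
      rw [this, es, Fin.snoc_castSucc, ih i hi]
    · have hin : i = n := by omega
      subst hin
      rfl

lemma range_es (n : ℕ) : Set.range (es hdim A f n) = ee hdim A f '' Set.Iio n := by
  ext x
  constructor
  · rintro ⟨⟨i, hi⟩, rfl⟩
    exact ⟨i, hi, (es_apply hdim A f n i hi).symm⟩
  · rintro ⟨i, hi, rfl⟩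
    exact ⟨⟨i, hi⟩, es_apply hdim A f n i hi⟩

/-- the filtration -/
def Fb (n : ℕ) : Submodule ℂ H := span ℂ (ee hdim A f '' Set.Iio n)

instance Fb_fd (n : ℕ) : FiniteDimensional ℂ (Fb hdim A f n) :=
  FiniteDimensional.span_of_finite ℂ ((Set.finite_Iio n).image _)

lemma Fb_mono {m n : ℕ} (h : m ≤ n) : Fb hdim A f m ≤ Fb hdim A f n :=
  span_mono (Set.image_mono (Set.Iio_subset_Iio h))

lemma Fb_zero : Fb hdim A f 0 = ⊥ := by
  rw [Fb, show Set.Iio (0:ℕ) = ∅ from by ext x; simp]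
  simp

lemma ee_spec (n : ℕ) : ‖ee hdim A f n‖ = 1 ∧ ee hdim A f n ∈ (Fb hdim A f n)ᗮ ∧
    target A f n (es hdim A f n) ∈ Fb hdim A f (n + 1) := by
  have hch := Classical.choose_spec (exists_next hdim (span ℂ (Set.range (es hdim A f n)))
    (FiniteDimensional.span_of_finite ℂ (Set.finite_range _)) (target A f n (es hdim A f n)))
  have hee : ee hdim A f n = Classical.choose (exists_next hdim
      (span ℂ (Set.range (es hdim A f n)))
      (FiniteDimensional.span_of_finite ℂ (Set.finite_range _)) (target A f n (es hdim A f n))) := by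
    rw [ee, es]
    exact Fin.snoc_last _ _
  rw [← hee] at hch
  obtain ⟨h1, h2, h3⟩ := hch
  rw [range_es] at h2 h3
  refine ⟨h1, h2, ?_⟩
  have : Fb hdim A f (n+1) = Fb hdim A f n ⊔ span ℂ {ee hdim A f n} := by
    rw [Fb, Fb]
    have : ee hdim A f '' Set.Iio (n+1) = insert (ee hdim A f n) (ee hdim A f '' Set.Iio n) := by
      rw [show Set.Iio (n+1) = insert n (Set.Iio n) by ext; simp, Set.image_insert_eq]
    rw [this, Submodule.span_insert]
    exact sup_comm _ _
  rw [this]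
  exact h3

lemma ee_orthonormal : Orthonormal ℂ (ee hdim A f) := by
  constructor
  · intro i; exact (ee_spec hdim A f i).1
  · intro i j hij
    rcases Nat.lt_or_ge i j with h | h
    · exact Submodule.inner_right_of_mem_orthogonal
        (Submodule.subset_span (Set.mem_image_of_mem _ (Set.mem_Iio.2 h)))
        (ee_spec hdim A f j).2.1
    · have h' : j < i := by omega
      rw [← inner_conj_symm]
      rw [Submodule.inner_right_of_mem_orthogonal
        (Submodule.subset_span (Set.mem_image_of_mem _ (Set.mem_Iio.2 h')))
        (ee_spec hdim A f i).2.1]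
      simp

/-- `F k` is the `k`-th space of the filtration adapted to `A` and the dense sequence `f`. -/
def FF (k : ℕ) : Submodule ℂ H := Fb hdim A f (2 ^ k - 1)

instance FF_fd (k : ℕ) : FiniteDimensional ℂ (FF hdim A f k) := Fb_fd hdim A f _

lemma FF_zero : FF hdim A f 0 = ⊥ := by
  rw [FF, show (2:ℕ)^0 - 1 = 0 from rfl]
  exact Fb_zero hdim A f

lemma FF_mono {m n : ℕ} (h : m ≤ n) : FF hdim A f m ≤ FF hdim A f n :=
  Fb_mono hdim A f (by have := Nat.pow_le_pow_right (by norm_num : 1 ≤ 2) h; omega)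

lemma target_eq_A (k p : ℕ) (hp : p < 2 ^ k - 1) (prev : Fin (2 ^ k - 1 + p) → H) :
    target A f (2 ^ k - 1 + p) prev = A (prev ⟨p, by omega⟩) := by
  have h1 : (1:ℕ) ≤ 2 ^ k := Nat.one_le_two_pow
  have h2 : (2:ℕ) ^ (k + 1) = 2 * 2 ^ k := by ring
  have hlog : Nat.log 2 (2 ^ k - 1 + p + 1) = k :=
    Nat.log_eq_of_pow_le_of_lt_pow (by omega) (by omega)
  rw [target]
  simp only [hlog]
  have hsub : 2 ^ k - 1 + p - (2 ^ k - 1) = p := by omega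
  simp only [hsub]
  rw [dif_pos hp]

lemma target_eq_f (k : ℕ) (prev : Fin (2 ^ (k + 1) - 2) → H) :
    target A f (2 ^ (k + 1) - 2) prev = f k := by
  have h1 : (1:ℕ) ≤ 2 ^ k := Nat.one_le_two_pow
  have h2 : (2:ℕ) ^ (k + 1) = 2 * 2 ^ k := by ring
  have hlog : Nat.log 2 (2 ^ (k + 1) - 2 + 1) = k :=
    Nat.log_eq_of_pow_le_of_lt_pow (by omega) (by omega)
  rw [target]
  simp only [hlog]
  have hsub : 2 ^ (k + 1) - 2 - (2 ^ k - 1) = 2 ^ k - 1 := by omega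
  simp only [hsub]
  rw [dif_neg (by omega)]

lemma ee_mem_FF {k p : ℕ} (hp : p < 2 ^ k - 1) : ee hdim A f p ∈ FF hdim A f k :=
  Submodule.subset_span (Set.mem_image_of_mem _ (Set.mem_Iio.2 hp))

lemma A_maps (k : ℕ) {x : H} (hx : x ∈ FF hdim A f k) : A x ∈ FF hdim A f (k + 1) := by
  have h1 : (1:ℕ) ≤ 2 ^ k := Nat.one_le_two_pow
  have h2 : (2:ℕ) ^ (k + 1) = 2 * 2 ^ k := by ring
  have himg : ∀ p, p < 2 ^ k - 1 → A (ee hdim A f p) ∈ FF hdim A f (k + 1) := by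
    intro p hp
    have hA : A (ee hdim A f p) = target A f (2 ^ k - 1 + p) (es hdim A f (2 ^ k - 1 + p)) := by
      rw [target_eq_A A f k p hp, es_apply]
    rw [hA]
    exact Fb_mono hdim A f (by omega) (ee_spec hdim A f (2 ^ k - 1 + p)).2.2
  have hx' : A x ∈ span ℂ ((A : H →ₗ[ℂ] H) '' (ee hdim A f '' Set.Iio (2 ^ k - 1))) :=
    Submodule.apply_mem_span_image_of_mem_span _ hx
  refine Submodule.span_le.2 ?_ hx'
  rintro _ ⟨_, ⟨p, hp, rfl⟩, rfl⟩
  exact himg p (Set.mem_Iio.1 hp)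

lemma f_mem (k : ℕ) : f k ∈ FF hdim A f (k + 1) := by
  have h1 : (1:ℕ) ≤ 2 ^ k := Nat.one_le_two_pow
  have h2 : (2:ℕ) ^ (k + 1) = 2 * 2 ^ k := by ring
  have hA : f k = target A f (2 ^ (k + 1) - 2) (es hdim A f (2 ^ (k + 1) - 2)) := by
    rw [target_eq_f]
  rw [hA]
  have := (ee_spec hdim A f (2 ^ (k + 1) - 2)).2.2
  have heq : 2 ^ (k + 1) - 2 + 1 = 2 ^ (k + 1) - 1 := by omega
  rw [heq] at this
  exact this


/-! ### density and the Hilbert basis -/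

lemma FF_dense (hf : DenseRange f) : Dense (⋃ m, (FF hdim A f m : Set H)) := by
  apply Dense.mono ?_ hf
  rintro _ ⟨k, rfl⟩
  exact Set.mem_iUnion.2 ⟨k + 1, f_mem hdim A f k⟩

lemma span_ee_dense (hf : DenseRange f) :
    ⊤ ≤ (span ℂ (Set.range (ee hdim A f))).topologicalClosure := by
  intro x _
  rw [← SetLike.mem_coe, Submodule.topologicalClosure_coe]
  have hsub : Set.range f ⊆ (span ℂ (Set.range (ee hdim A f)) : Set H) := by
    rintro _ ⟨k, rfl⟩
    have h1 : FF hdim A f (k + 1) ≤ span ℂ (Set.range (ee hdim A f)) :=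
      span_mono (Set.image_subset_range _ _)
    exact h1 (f_mem hdim A f k)
  have := (hf.mono hsub)
  exact this x

/-- the adapted Hilbert basis -/
def bb (hf : DenseRange f) : HilbertBasis ℕ ℂ H :=
  HilbertBasis.mk (ee_orthonormal hdim A f) (span_ee_dense hdim A f hf)

lemma bb_coe (hf : DenseRange f) : ⇑(bb hdim A f hf) = ee hdim A f :=
  HilbertBasis.coe_mk _ _

/-! ### the shift map on indices -/

def sig (i : ℕ) : ℕ := i + 2 ^ Nat.log 2 (i + 1)

lemma log_sig (i : ℕ) : Nat.log 2 (sig i + 1) = Nat.log 2 (i + 1) + 1 := by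
  set k := Nat.log 2 (i + 1) with hk
  have h1 : 2 ^ k ≤ i + 1 := Nat.pow_log_le_self 2 (Nat.succ_ne_zero i)
  have h2 : i + 1 < 2 ^ (k + 1) := Nat.lt_pow_succ_log_self (by norm_num) _
  have e1 : (2:ℕ) ^ (k + 1) = 2 * 2 ^ k := by ring
  have e2 : (2:ℕ) ^ (k + 1 + 1) = 4 * 2 ^ k := by ring
  exact Nat.log_eq_of_pow_le_of_lt_pow (by simp only [sig]; rw [← hk]; omega)
    (by simp only [sig]; rw [← hk]; omega)

lemma sig_inj : Function.Injective sig := by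
  intro i j h
  have hi := log_sig i
  have hj := log_sig j
  have hlog : Nat.log 2 (i + 1) = Nat.log 2 (j + 1) := by rw [h] at hi; omega
  rw [sig, sig, hlog] at h
  omega

lemma sig_lt {i j k : ℕ} (h : sig i = j) (hj : j < 2 ^ (k + 1) - 1) : i < 2 ^ k - 1 := by
  set l := Nat.log 2 (i + 1) with hl
  have h1 : 2 ^ l ≤ i + 1 := Nat.pow_log_le_self 2 (Nat.succ_ne_zero i)
  have h2 : i + 1 < 2 ^ (l + 1) := Nat.lt_pow_succ_log_self (by norm_num) _
  have e1 : (2:ℕ) ^ (l + 1) = 2 * 2 ^ l := by ring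
  have hge : 2 ^ (l + 1) ≤ j + 1 := by rw [← h]; simp only [sig]; rw [← hl]; omega
  have hlk : l + 1 ≤ k := by
    by_contra hcon
    push_neg at hcon
    have : (2:ℕ) ^ (k + 1) ≤ 2 ^ (l + 1) := Nat.pow_le_pow_right (by norm_num) (by omega)
    omega
  have h3 : (2:ℕ) ^ (l + 1) ≤ 2 ^ k := Nat.pow_le_pow_right (by norm_num) hlk
  omega

/-! ### the isometry `V` and the shift `J` -/

def Viso (hf : DenseRange f) : H →ₗᵢ[ℂ] H :=
  ((ee_orthonormal hdim A f).comp sig sig_inj).orthogonalFamily.linearIsometry.comp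
    (bb hdim A f hf).repr.toLinearIsometry

def V (hf : DenseRange f) : H →L[ℂ] H := (Viso hdim A f hf).toContinuousLinearMap

lemma V_apply (hf : DenseRange f) (x : H) : V hdim A f hf x = Viso hdim A f hf x := rfl

lemma V_norm_map (hf : DenseRange f) (x : H) : ‖V hdim A f hf x‖ = ‖x‖ :=
  (Viso hdim A f hf).norm_map x

lemma V_inner_map (hf : DenseRange f) (x y : H) :
    ⟪V hdim A f hf x, V hdim A f hf y⟫ = ⟪x, y⟫ :=
  (Viso hdim A f hf).inner_map_map x y

lemma V_hasSum (hf : DenseRange f) (x : H) :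
    HasSum (fun i => (bb hdim A f hf).repr x i • ee hdim A f (sig i)) (V hdim A f hf x) := by
  have := ((ee_orthonormal hdim A f).comp sig sig_inj).orthogonalFamily.hasSum_linearIsometry
    ((bb hdim A f hf).repr x)
  simpa [LinearIsometry.toSpanSingleton_apply, Function.comp, V_apply, Viso] using this

lemma inner_ee_V (hf : DenseRange f) {j : ℕ} {x : H}
    (h : ∀ i, sig i = j → ⟪ee hdim A f i, x⟫ = 0) : ⟪ee hdim A f j, V hdim A f hf x⟫ = 0 := by
  have hs := (V_hasSum hdim A f hf x).mapL (innerSL ℂ (ee hdim A f j))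
  have hz : (fun i => innerSL ℂ (ee hdim A f j)
      ((bb hdim A f hf).repr x i • ee hdim A f (sig i))) = fun _ => (0:ℂ) := by
    funext i
    rcases eq_or_ne (sig i) j with hij | hij
    · have h0 : (bb hdim A f hf).repr x i = 0 := by
        rw [HilbertBasis.repr_apply_apply, bb_coe]
        exact h i hij
      simp [h0]
    · have h0 : ⟪ee hdim A f j, ee hdim A f (sig i)⟫ = 0 :=
        (ee_orthonormal hdim A f).2 (Ne.symm hij)
      simp [innerSL_apply_apply, inner_smul_right, h0]
  rw [hz] at hs
  exact hs.unique hasSum_zero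

lemma V_orth (hf : DenseRange f) {k : ℕ} {x : H} (hx : x ∈ (FF hdim A f k)ᗮ) :
    V hdim A f hf x ∈ (FF hdim A f (k + 1))ᗮ := by
  apply mem_orthogonal_span_of
  rintro _ ⟨j, hj, rfl⟩
  apply inner_ee_V
  intro i hij
  exact Submodule.inner_right_of_mem_orthogonal
    (ee_mem_FF hdim A f (sig_lt hij (Set.mem_Iio.1 hj))) hx

lemma V_norm_le (hf : DenseRange f) : ‖V hdim A f hf‖ ≤ 1 :=
  ContinuousLinearMap.opNorm_le_bound _ zero_le_one
    (fun y => by rw [V_norm_map, one_mul])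

def Jop (hf : DenseRange f) (c : ℝ) : H →L[ℂ] H :=
  (c : ℂ) • ContinuousLinearMap.adjoint (V hdim A f hf)

def Jinv (hf : DenseRange f) (c : ℝ) : H →L[ℂ] H := ((c : ℂ))⁻¹ • V hdim A f hf

lemma adjV_mul_V (hf : DenseRange f) :
    ContinuousLinearMap.adjoint (V hdim A f hf) * V hdim A f hf = 1 := by
  refine ContinuousLinearMap.ext fun x => ?_
  refine ext_inner_right ℂ fun y => ?_
  rw [ContinuousLinearMap.mul_apply, ContinuousLinearMap.adjoint_inner_left,
    V_inner_map, ContinuousLinearMap.one_apply]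

lemma Jop_mul_Jinv (hf : DenseRange f) {c : ℝ} (hc : c ≠ 0) :
    Jop hdim A f hf c * Jinv hdim A f hf c = 1 := by
  rw [Jop, Jinv, smul_mul_smul_comm, adjV_mul_V]
  have : (c : ℂ) * ((c : ℂ))⁻¹ = 1 := mul_inv_cancel₀ (by exact_mod_cast hc)
  rw [this, one_smul]

lemma Jop_norm_pt (hf : DenseRange f) {c : ℝ} (hc : 0 ≤ c) (y : H) :
    ‖Jop hdim A f hf c y‖ ≤ c * ‖y‖ := by
  rw [Jop]
  have hadj : ‖ContinuousLinearMap.adjoint (V hdim A f hf)‖ ≤ 1 := by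
    rw [(ContinuousLinearMap.adjoint :
      (H →L[ℂ] H) ≃ₗᵢ⋆[ℂ] (H →L[ℂ] H)).norm_map (V hdim A f hf)]
    exact V_norm_le hdim A f hf
  calc ‖(c : ℂ) • ContinuousLinearMap.adjoint (V hdim A f hf) y‖
      = c * ‖ContinuousLinearMap.adjoint (V hdim A f hf) y‖ := by
        rw [norm_smul, Complex.norm_real, Real.norm_eq_abs, abs_of_nonneg hc]
    _ ≤ c * (1 * ‖y‖) := by
        refine mul_le_mul_of_nonneg_left ?_ hc
        exact le_trans (ContinuousLinearMap.le_opNorm _ y)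
          (mul_le_mul_of_nonneg_right hadj (norm_nonneg y))
    _ = c * ‖y‖ := by ring

lemma Jinv_norm_pt (hf : DenseRange f) {c : ℝ} (hc : 0 < c) (y : H) :
    ‖Jinv hdim A f hf c y‖ ≤ c⁻¹ * ‖y‖ := by
  rw [Jinv, ContinuousLinearMap.smul_apply, norm_smul, norm_inv, Complex.norm_real,
    Real.norm_eq_abs, abs_of_nonneg hc.le, V_norm_map]

lemma Jop_lower (hf : DenseRange f) (c : ℝ) {k : ℕ} {x : H} (hx : x ∈ FF hdim A f (k + 1)) :
    Jop hdim A f hf c x ∈ FF hdim A f k := by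
  have hadj : ContinuousLinearMap.adjoint (V hdim A f hf) x ∈ FF hdim A f k := by
    rw [← Submodule.orthogonal_orthogonal (FF hdim A f k)]
    rw [Submodule.mem_orthogonal]
    intro u hu
    rw [ContinuousLinearMap.adjoint_inner_right]
    exact Submodule.inner_left_of_mem_orthogonal hx (V_orth hdim A f hf hu)
  exact Submodule.smul_mem _ _ hadj



/-! ### the operator `T₂ = A - J` and its growth estimate -/

/-- step estimate -/
lemma step_bound (hf : DenseRange f) (k : ℕ) (y : H) :
    ‖(A - Jop hdim A f hf (16 * (‖A‖ + 1))) y -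
        piK (FF hdim A f k) ((A - Jop hdim A f hf (16 * (‖A‖ + 1))) y)‖ ≤
      (‖A‖ + 1) * ‖y - piK (FF hdim A f (k - 1)) y‖ +
        (16 * (‖A‖ + 1)) * ‖y - piK (FF hdim A f (k + 1)) y‖ := by
  set c : ℝ := 16 * (‖A‖ + 1) with hc
  have hc0 : (0:ℝ) ≤ c := by positivity
  set p1 := piK (FF hdim A f (k - 1)) y with hp1
  set p2 := piK (FF hdim A f (k + 1)) y with hp2
  have hw : A p1 - Jop hdim A f hf c p2 ∈ FF hdim A f k := by
    apply Submodule.sub_mem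
    · rcases Nat.eq_zero_or_pos k with hk | hk
      · subst hk
        have hle : FF hdim A f 0 ≤ ⊥ := le_of_eq (FF_zero hdim A f)
        have h0 : p1 = 0 := by
          rw [hp1]
          show piK (FF hdim A f 0) y = 0
          exact (Submodule.mem_bot ℂ).1 (hle (piK_mem (FF hdim A f 0) y))
        rw [h0, map_zero]
        exact Submodule.zero_mem _
      · have hA := A_maps hdim A f (k - 1) (piK_mem (FF hdim A f (k - 1)) y)
        rwa [show k - 1 + 1 = k by omega] at hA
    · exact Jop_lower hdim A f hf c (piK_mem (FF hdim A f (k + 1)) y)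
  have heq : (A - Jop hdim A f hf c) y - (A p1 - Jop hdim A f hf c p2) =
      A (y - p1) - Jop hdim A f hf c (y - p2) := by
    simp only [ContinuousLinearMap.sub_apply, map_sub]
    abel
  calc ‖(A - Jop hdim A f hf c) y - piK (FF hdim A f k) ((A - Jop hdim A f hf c) y)‖
      ≤ ‖(A - Jop hdim A f hf c) y - (A p1 - Jop hdim A f hf c p2)‖ :=
        norm_sub_piK_le _ _ hw
    _ = ‖A (y - p1) - Jop hdim A f hf c (y - p2)‖ := by rw [heq]
    _ ≤ ‖A (y - p1)‖ + ‖Jop hdim A f hf c (y - p2)‖ := norm_sub_le _ _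
    _ ≤ (‖A‖ + 1) * ‖y - p1‖ + c * ‖y - p2‖ := by
        refine add_le_add ?_ (Jop_norm_pt hdim A f hf hc0 _)
        refine le_trans (A.le_opNorm _) ?_
        exact mul_le_mul_of_nonneg_right (by linarith) (norm_nonneg _)

lemma growth (hf : DenseRange f) {u : H} {m : ℕ} (hu : u ∈ FF hdim A f m) :
    ∀ (n k : ℕ), ‖((A - Jop hdim A f hf (16 * (‖A‖ + 1))) ^ n) u -
        piK (FF hdim A f k) (((A - Jop hdim A f hf (16 * (‖A‖ + 1))) ^ n) u)‖ ≤
      ‖u‖ * 4 ^ m * (8 * (‖A‖ + 1)) ^ n * ((4:ℝ)⁻¹) ^ k := by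
  set c : ℝ := 16 * (‖A‖ + 1) with hc
  set M : ℝ := ‖A‖ + 1 with hM
  have hM1 : (1:ℝ) ≤ M := by rw [hM]; linarith [norm_nonneg A]
  set T : H →L[ℂ] H := A - Jop hdim A f hf c with hT
  intro n
  induction n with
  | zero =>
    intro k
    simp only [pow_zero, ContinuousLinearMap.one_apply]
    rcases le_or_gt m k with h | h
    · have hpik : piK (FF hdim A f k) u = u := piK_eq_self _ (FF_mono hdim A f h hu)
      rw [hpik, sub_self, norm_zero]
      positivity
    · refine le_trans (norm_sub_piK_le_self _ u) ?_
      have hkm : (4:ℝ) ^ k ≤ 4 ^ m := by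
        apply pow_le_pow_right₀ (by norm_num) h.le
      have hk4 : (0:ℝ) < (4:ℝ) ^ k := by positivity
      have key : (1:ℝ) ≤ 4 ^ m * ((4:ℝ)⁻¹) ^ k := by
        rw [inv_pow, ← div_eq_mul_inv, le_div_iff₀ hk4, one_mul]
        exact hkm
      calc ‖u‖ = ‖u‖ * 1 := by ring
        _ ≤ ‖u‖ * (4 ^ m * ((4:ℝ)⁻¹) ^ k) := mul_le_mul_of_nonneg_left key (norm_nonneg u)
        _ = ‖u‖ * 4 ^ m * (8 * M) ^ (0:ℕ) * ((4:ℝ)⁻¹) ^ k := by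
            rw [pow_zero]; ring
  | succ n ih =>
    intro k
    have heq : (T ^ (n + 1)) u = T ((T ^ n) u) := by
      rw [pow_succ', ContinuousLinearMap.mul_apply]
    rw [heq]
    refine le_trans (step_bound hdim A f hf k ((T ^ n) u)) ?_
    have h1 := ih (k - 1)
    have h2 := ih (k + 1)
    set B : ℝ := ‖u‖ * 4 ^ m * (8 * M) ^ n with hB
    have hB0 : (0:ℝ) ≤ B := by positivity
    rcases Nat.eq_zero_or_pos k with hk | hk
    · subst hk
      have e0 : ((4:ℝ)⁻¹) ^ ((0:ℕ) - 1) = 1 := pow_zero _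
      rw [e0, mul_one] at h1
      have target : M * B + c * (B * ((4:ℝ)⁻¹) ^ ((0:ℕ) + 1)) ≤
          B * (8 * M) * ((4:ℝ)⁻¹) ^ (0:ℕ) := by
        simp only [pow_one, pow_zero, mul_one, hc]
        nlinarith [hB0, hM1]
      refine le_trans (add_le_add
        (mul_le_mul_of_nonneg_left h1 (by linarith))
        (mul_le_mul_of_nonneg_left h2 (by positivity))) ?_
      refine le_trans target (le_of_eq ?_)
      rw [hB]; ring
    · obtain ⟨j, rfl⟩ : ∃ j, k = j + 1 := ⟨k - 1, by omega⟩
      have hj1 : j + 1 - 1 = j := by omega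
      rw [hj1] at h1
      have e1 : ((4:ℝ)⁻¹) ^ j = 4 * ((4:ℝ)⁻¹) ^ (j + 1) := by
        rw [pow_succ]; field_simp
      have e2 : ((4:ℝ)⁻¹) ^ (j + 1 + 1) = (4:ℝ)⁻¹ * ((4:ℝ)⁻¹) ^ (j + 1) := by
        rw [pow_succ]; ring
      refine le_trans (add_le_add
        (mul_le_mul_of_nonneg_left h1 (by linarith))
        (mul_le_mul_of_nonneg_left h2 (by positivity))) ?_
      refine le_of_eq ?_
      rw [hB, e1, e2, hM]
      ring

/-- powers of `J` annihilate the filtration -/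
lemma Jop_pow_mem (hf : DenseRange f) (c : ℝ) {u : H} {m : ℕ} (hu : u ∈ FF hdim A f m) :
    ∀ n : ℕ, (Jop hdim A f hf c ^ n) u ∈ FF hdim A f (m - n) := by
  intro n
  induction n with
  | zero => simpa using hu
  | succ n ih =>
    have heq : (Jop hdim A f hf c ^ (n + 1)) u
        = Jop hdim A f hf c ((Jop hdim A f hf c ^ n) u) := by
      rw [pow_succ', ContinuousLinearMap.mul_apply]
    rw [heq]
    rcases Nat.eq_zero_or_pos (m - n) with h0 | h0
    · have hle : FF hdim A f (m - n) ≤ ⊥ := by rw [h0]; exact le_of_eq (FF_zero hdim A f)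
      have hz : (Jop hdim A f hf c ^ n) u = 0 := (Submodule.mem_bot ℂ).1 (hle ih)
      rw [hz, map_zero]
      exact Submodule.zero_mem _
    · have hmn : m - n = (m - (n + 1)) + 1 := by omega
      rw [hmn] at ih
      exact Jop_lower hdim A f hf c ih

lemma Jop_pow_eq_zero (hf : DenseRange f) (c : ℝ) {u : H} {m : ℕ} (hu : u ∈ FF hdim A f m)
    {n : ℕ} (hn : m ≤ n) : (Jop hdim A f hf c ^ n) u = 0 := by
  have hmem := Jop_pow_mem hdim A f hf c hu n
  have hle : FF hdim A f (m - n) ≤ ⊥ := by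
    rw [show m - n = 0 by omega]
    exact le_of_eq (FF_zero hdim A f)
  exact (Submodule.mem_bot ℂ).1 (hle hmem)


/-! ### hypercyclicity of `J` -/

theorem Jop_hypercyclic [TopologicalSpace.SeparableSpace H] (hf : DenseRange f) :
    Hypercyclic (Jop hdim A f hf (16 * (‖A‖ + 1))) := by
  set c : ℝ := 16 * (‖A‖ + 1) with hc
  have hA0 : (0:ℝ) ≤ ‖A‖ := norm_nonneg A
  have hc1 : (1:ℝ) < c := by rw [hc]; linarith
  have hc0 : (0:ℝ) < c := by linarith
  apply hypercyclic_of_dense_trans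
  intro U W hU hW hUne hWne
  obtain ⟨u, huD, huU⟩ := (FF_dense hdim A f hf).exists_mem_open hU hUne
  obtain ⟨v, hvW⟩ := hWne
  obtain ⟨m, hum⟩ := Set.mem_iUnion.1 huD
  obtain ⟨ε, hε, hball⟩ := Metric.isOpen_iff.1 hU u huU
  have htend : Filter.Tendsto (fun n : ℕ => (c⁻¹) ^ n * ‖v‖) Filter.atTop (𝓝 0) := by
    have h1 : Filter.Tendsto (fun n : ℕ => (c⁻¹) ^ n) Filter.atTop (𝓝 0) :=
      tendsto_pow_atTop_nhds_zero_of_lt_one (by positivity) (inv_lt_one_of_one_lt₀ hc1)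
    simpa using h1.mul_const ‖v‖
  obtain ⟨n, hn1, hn2⟩ := ((htend.eventually_lt_const hε).and
    (Filter.eventually_ge_atTop m)).exists
  refine ⟨n, u + (Jinv hdim A f hf c ^ n) v, hball ?_, ?_⟩
  · rw [Metric.mem_ball, dist_eq_norm, add_sub_cancel_left]
    have := pow_apply_norm_le (C := c⁻¹) (by positivity)
      (fun y => Jinv_norm_pt hdim A f hf hc0 y) n v
    exact lt_of_le_of_lt this hn1
  · have hzero : (Jop hdim A f hf c ^ n) u = 0 :=
      Jop_pow_eq_zero hdim A f hf c hum hn2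
    have hone : (Jop hdim A f hf c ^ n) ((Jinv hdim A f hf c ^ n) v) = v := by
      have := pow_mul_pow_eq_one (Jop_mul_Jinv hdim A f hf (ne_of_gt hc0)) n
      calc (Jop hdim A f hf c ^ n) ((Jinv hdim A f hf c ^ n) v)
          = ((Jop hdim A f hf c ^ n) * (Jinv hdim A f hf c ^ n)) v := rfl
        _ = v := by rw [this, ContinuousLinearMap.one_apply]
    rw [map_add, hzero, hone, zero_add]
    exact hvW

/-! ### hypercyclicity of `A - J` -/

theorem T2_hypercyclic [TopologicalSpace.SeparableSpace H] (hf : DenseRange f) :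
    Hypercyclic (A - Jop hdim A f hf (16 * (‖A‖ + 1))) := by
  set c : ℝ := 16 * (‖A‖ + 1) with hc
  set M : ℝ := ‖A‖ + 1 with hM
  have hA0 : (0:ℝ) ≤ ‖A‖ := norm_nonneg A
  have hM1 : (1:ℝ) ≤ M := by rw [hM]; linarith
  have hM0 : (0:ℝ) < M := by linarith
  have hc0 : (0:ℝ) < c := by rw [hc]; linarith
  set T : H →L[ℂ] H := A - Jop hdim A f hf c with hT
  -- the right inverse
  set R : H →L[ℂ] H := A * Jinv hdim A f hf c with hR
  have hRnorm : ‖R‖ ≤ 16⁻¹ := by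
    have h1 : ‖Jinv hdim A f hf c‖ ≤ c⁻¹ :=
      ContinuousLinearMap.opNorm_le_bound _ (by positivity)
        (fun y => Jinv_norm_pt hdim A f hf hc0 y)
    have h2 : ‖R‖ ≤ ‖A‖ * c⁻¹ := by
      refine le_trans (norm_mul_le _ _) ?_
      exact mul_le_mul_of_nonneg_left h1 hA0
    refine le_trans h2 ?_
    have e : (‖A‖ + 1) * (16 * (‖A‖ + 1))⁻¹ = 16⁻¹ := by
      field_simp
    calc ‖A‖ * c⁻¹ ≤ (‖A‖ + 1) * c⁻¹ := by
          refine mul_le_mul_of_nonneg_right (by linarith) (by positivity)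
      _ = 16⁻¹ := by rw [hc]; exact e
  have hRlt : ‖R‖ < 1 := lt_of_le_of_lt hRnorm (by norm_num)
  set Wu : (H →L[ℂ] H)ˣ := Units.oneSub R hRlt with hWu
  set W : H →L[ℂ] H := ↑(Wu⁻¹) with hW
  have hWval : (Wu : H →L[ℂ] H) = 1 - R := rfl
  have hWsum : W = ∑' n : ℕ, R ^ n := rfl
  have hWnorm : ‖W‖ ≤ (1 - 16⁻¹)⁻¹ := by
    rw [hWsum]
    have hgeo : HasSum (fun n : ℕ => (16⁻¹:ℝ) ^ n) (1 - 16⁻¹)⁻¹ :=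
      hasSum_geometric_of_lt_one (by norm_num) (by norm_num)
    refine tsum_of_norm_bounded hgeo ?_
    intro i
    induction i with
    | zero =>
      simp only [pow_zero]
      exact ContinuousLinearMap.norm_id_le
    | succ i ih =>
      rw [pow_succ, pow_succ]
      refine le_trans (norm_mul_le _ _) ?_
      exact mul_le_mul ih hRnorm (norm_nonneg _) (by norm_num)
  set V2 : H →L[ℂ] H := (-(Jinv hdim A f hf c)) * W with hV2
  have hTV2 : T * V2 = 1 := by
    have h1 : T * (-(Jinv hdim A f hf c)) = 1 - R := by
      rw [hT, hR, sub_mul, mul_neg, mul_neg, Jop_mul_Jinv hdim A f hf (ne_of_gt hc0)]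
      abel
    rw [hV2, ← mul_assoc, h1, ← hWval, hW, Units.mul_inv]
  have hV2pt : ∀ y, ‖V2 y‖ ≤ (15 * M)⁻¹ * ‖y‖ := by
    intro y
    have h1 : ‖V2 y‖ ≤ ‖-(Jinv hdim A f hf c)‖ * ‖W y‖ := by
      show ‖((-(Jinv hdim A f hf c)) * W) y‖ ≤ _
      rw [ContinuousLinearMap.mul_apply]
      exact ContinuousLinearMap.le_opNorm _ _
    have h2 : ‖-(Jinv hdim A f hf c)‖ ≤ c⁻¹ := by
      rw [norm_neg]
      exact ContinuousLinearMap.opNorm_le_bound _ (by positivity)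
        (fun z => Jinv_norm_pt hdim A f hf hc0 z)
    have h3 : ‖W y‖ ≤ (1 - 16⁻¹)⁻¹ * ‖y‖ :=
      le_trans (W.le_opNorm y) (mul_le_mul_of_nonneg_right hWnorm (norm_nonneg y))
    have h4 : c⁻¹ * ((1 - 16⁻¹)⁻¹ * ‖y‖) = (15 * M)⁻¹ * ‖y‖ := by
      rw [hc, hM]
      have : (16 * (‖A‖ + 1) : ℝ) ≠ 0 := by positivity
      field_simp
      ring
    calc ‖V2 y‖ ≤ c⁻¹ * ((1 - 16⁻¹)⁻¹ * ‖y‖) := by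
          refine le_trans h1 ?_
          refine mul_le_mul h2 h3 (norm_nonneg _) (by positivity)
      _ = (15 * M)⁻¹ * ‖y‖ := h4
  -- transitivity
  apply hypercyclic_of_dense_trans
  intro U W' hU hW' hUne hW'ne
  obtain ⟨u, huD, huU⟩ := (FF_dense hdim A f hf).exists_mem_open hU hUne
  obtain ⟨v, hvW'⟩ := hW'ne
  obtain ⟨m, hum⟩ := Set.mem_iUnion.1 huD
  obtain ⟨ε, hε, hball⟩ := Metric.isOpen_iff.1 hU u huU
  have h15 : ((15 * M : ℝ))⁻¹ < 1 := by
    apply inv_lt_one_of_one_lt₀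
    linarith
  have h815 : (8 / 15 : ℝ) < 1 := by norm_num
  have htend : Filter.Tendsto
      (fun n : ℕ => ((15 * M)⁻¹) ^ n * ‖v‖ + (8 / 15 : ℝ) ^ n * (‖u‖ * 4 ^ m))
      Filter.atTop (𝓝 0) := by
    have h1 : Filter.Tendsto (fun n : ℕ => ((15 * M)⁻¹) ^ n) Filter.atTop (𝓝 0) :=
      tendsto_pow_atTop_nhds_zero_of_lt_one (by positivity) h15
    have h2 : Filter.Tendsto (fun n : ℕ => (8 / 15 : ℝ) ^ n) Filter.atTop (𝓝 0) :=
      tendsto_pow_atTop_nhds_zero_of_lt_one (by norm_num) h815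
    have := (h1.mul_const ‖v‖).add (h2.mul_const (‖u‖ * 4 ^ m))
    simpa using this
  obtain ⟨n, hn1, hn2⟩ := ((htend.eventually_lt_const hε).and
    (Filter.eventually_ge_atTop m)).exists
  refine ⟨n, u + (V2 ^ n) (v - (T ^ n) u), hball ?_, ?_⟩
  · rw [Metric.mem_ball, dist_eq_norm, add_sub_cancel_left]
    have hgrow : ‖(T ^ n) u‖ ≤ ‖u‖ * 4 ^ m * (8 * M) ^ n := by
      have := growth hdim A f hf hum n 0
      have hpi0 : piK (FF hdim A f 0) ((T ^ n) u) = 0 := by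
        have hle : FF hdim A f 0 ≤ ⊥ := le_of_eq (FF_zero hdim A f)
        exact (Submodule.mem_bot ℂ).1 (hle (piK_mem _ _))
      rw [hpi0, sub_zero, pow_zero, mul_one] at this
      exact this
    have hv2n := pow_apply_norm_le (C := (15 * M)⁻¹) (by positivity) hV2pt n (v - (T ^ n) u)
    have hsub : ‖v - (T ^ n) u‖ ≤ ‖v‖ + ‖u‖ * 4 ^ m * (8 * M) ^ n :=
      le_trans (norm_sub_le _ _) (by linarith)
    have hkey : ((15 * M)⁻¹) ^ n * (‖v‖ + ‖u‖ * 4 ^ m * (8 * M) ^ n) ≤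
        ((15 * M)⁻¹) ^ n * ‖v‖ + (8 / 15 : ℝ) ^ n * (‖u‖ * 4 ^ m) := by
      have e : ((15 * M)⁻¹) ^ n * (8 * M) ^ n = (8 / 15 : ℝ) ^ n := by
        rw [← mul_pow]
        congr 1
        field_simp
      have h0 : (0:ℝ) ≤ ((15 * M)⁻¹) ^ n := by positivity
      refine le_of_eq ?_
      calc ((15 * M)⁻¹) ^ n * (‖v‖ + ‖u‖ * 4 ^ m * (8 * M) ^ n)
          = ((15 * M)⁻¹) ^ n * ‖v‖ +
            (((15 * M)⁻¹) ^ n * (8 * M) ^ n) * (‖u‖ * 4 ^ m) := by ring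
        _ = ((15 * M)⁻¹) ^ n * ‖v‖ + (8 / 15 : ℝ) ^ n * (‖u‖ * 4 ^ m) := by rw [e]
    calc ‖(V2 ^ n) (v - (T ^ n) u)‖
        ≤ ((15 * M)⁻¹) ^ n * ‖v - (T ^ n) u‖ := hv2n
      _ ≤ ((15 * M)⁻¹) ^ n * (‖v‖ + ‖u‖ * 4 ^ m * (8 * M) ^ n) :=
          mul_le_mul_of_nonneg_left hsub (by positivity)
      _ ≤ ((15 * M)⁻¹) ^ n * ‖v‖ + (8 / 15 : ℝ) ^ n * (‖u‖ * 4 ^ m) := hkey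
      _ < ε := hn1
  · have hone : (T ^ n) ((V2 ^ n) (v - (T ^ n) u)) = v - (T ^ n) u := by
      have := pow_mul_pow_eq_one hTV2 n
      calc (T ^ n) ((V2 ^ n) (v - (T ^ n) u))
          = ((T ^ n) * (V2 ^ n)) (v - (T ^ n) u) := rfl
        _ = v - (T ^ n) u := by rw [this, ContinuousLinearMap.one_apply]
    rw [map_add, hone]
    have : (T ^ n) u + (v - (T ^ n) u) = v := by abel
    rw [this]
    exact hvW'

end Construction

theorem exists_sum_two_hypercyclic [TopologicalSpace.SeparableSpace H]
    (hdim : ¬FiniteDimensional ℂ H) (A : H →L[ℂ] H) :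
    ∃ T₁ T₂ : H →L[ℂ] H, Hypercyclic T₁ ∧ Hypercyclic T₂ ∧ A = T₁ + T₂ := by
  haveI : Nonempty H := ⟨0⟩
  obtain ⟨f, hf⟩ := TopologicalSpace.exists_dense_seq H
  exact ⟨Jop hdim A f hf (16 * (‖A‖ + 1)), A - Jop hdim A f hf (16 * (‖A‖ + 1)),
    Jop_hypercyclic hdim A f hf, T2_hypercyclic hdim A f hf, by abel⟩


end Chan

/-- Chan's theorem: on a separable infinite-dimensional complex Hilbert space, the linear
span of the hypercyclic operators is dense in `B(H)` in the operator norm topology. -/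
theorem span_hypercyclic_dense_norm_topology {H : Type*}
    [NormedAddCommGroup H] [InnerProductSpace ℂ H] [CompleteSpace H]
    [TopologicalSpace.SeparableSpace H] (hdim : ¬FiniteDimensional ℂ H) :
    Dense (Submodule.span ℂ {T : H →L[ℂ] H | Hypercyclic T} : Set (H →L[ℂ] H)) := by
  have huniv : (Submodule.span ℂ {T : H →L[ℂ] H | Hypercyclic T} : Set (H →L[ℂ] H))
      = Set.univ := by
    apply Set.eq_univ_of_forall
    intro A
    obtain ⟨T₁, T₂, h1, h2, hA⟩ := Chan.exists_sum_two_hypercyclic hdim A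
    rw [SetLike.mem_coe, hA]
    exact Submodule.add_mem _ (Submodule.subset_span h1) (Submodule.subset_span h2)
  rw [huniv]
  exact dense_univ
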